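/- Let u be harmonic on B(p,R) ⊂ ℝⁿ with u not identically zero, and define H(p,r) = ∫_{∂B(p,r)} u² dS and the frequency β(p,r) = r·H'(p,r)/(2·H(p,r)). Then for 0 < r₁ < r₂ < R, H(p,r₂)/H(p,r₁) = exp(2 ∫_{r₁}^{r₂} β(p,r) d(log r)), and if β is non-decreasing in r then (r₂/r₁)^{2β(p,r₁)} ≤ H(p,r₂)/H(p,r₁) ≤ (r₂/r₁)^{2β(p,r₂)}. -/

import Mathlib

open Real Metric Set MeasureTheory intervalIntegral

/-- `u` is harmonic on `s ⊆ ℝⁿ`. -/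
def IsHarmonicOn {n : ℕ} (u : EuclideanSpace ℝ (Fin n) → ℝ)
    (s : Set (EuclideanSpace ℝ (Fin n))) : Prop :=
  ContDiffOn ℝ 2 u s ∧ ∀ x ∈ s,
    ∑ i : Fin n,
      (fderiv ℝ (fun y => fderiv ℝ u y (EuclideanSpace.single i 1)) x)
        (EuclideanSpace.single i 1) = 0

/-- `H p r = ∫_{∂B(p,r)} u² dS`: the integral of `u²` over the sphere of radius `r`
around `p`, written via the surface measure on the unit sphere. -/
noncomputable def sphereL2 {n : ℕ} (u : EuclideanSpace ℝ (Fin n) → ℝ)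
    (p : EuclideanSpace ℝ (Fin n)) (r : ℝ) : ℝ :=
  r ^ (n - 1) * ∫ y : Metric.sphere (0 : EuclideanSpace ℝ (Fin n)) 1,
    (u (p + r • (y : EuclideanSpace ℝ (Fin n))))^2 ∂((volume : Measure (EuclideanSpace ℝ (Fin n))).toSphere)

/-- For `u` harmonic on `B(p,R)`, with `H(p,r) = ∫_{∂B(p,r)} u²` positive and differentiable
and frequency `β(p,r) = r H'(p,r)/(2H(p,r))`, one has
`H(p,r₂)/H(p,r₁) = exp(2∫_{r₁}^{r₂} β(p,r) dlog r)`, and if `β` is non-decreasing then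
`(r₂/r₁)^{2β(p,r₁)} ≤ H(p,r₂)/H(p,r₁) ≤ (r₂/r₁)^{2β(p,r₂)}`. -/
lemma sphereL2_lipschitz_bound {n : ℕ} (u : EuclideanSpace ℝ (Fin n) → ℝ)
    (p : EuclideanSpace ℝ (Fin n)) (R : ℝ)
    (hu2 : ContDiffOn ℝ 2 u (ball p R))
    (r₁ r₂ : ℝ) (h1 : 0 < r₁) (h12 : r₁ < r₂) (h2 : r₂ < R) :
    ∃ K : ℝ, 0 ≤ K ∧ ∀ x ∈ Set.Ioo (r₁/2) ((r₂+R)/2), ∀ x' ∈ Set.Ioo (r₁/2) ((r₂+R)/2),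
      |sphereL2 u p x - sphereL2 u p x'| ≤ K * |x - x'| := by
  classical
  set b : ℝ := (r₂ + R)/2 with hbdef
  have hb0 : 0 < b := by simp only [hbdef]; linarith
  have hbR : b < R := by simp only [hbdef]; linarith
  set s : Set ℝ := Set.Ioo (r₁/2) b with hsdef
  set v : EuclideanSpace ℝ (Fin n) → ℝ := fun x => (u x)^2 with hvdef
  have hv1 : ContDiffOn ℝ 1 v (ball p R) := (hu2.of_le one_le_two).pow 2
  have hball : closedBall p b ⊆ ball p R := closedBall_subset_ball hbR
  have hKc : IsCompact (closedBall p b) := isCompact_closedBall _ _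
  have hvd : DifferentiableOn ℝ v (ball p R) := hv1.differentiableOn one_ne_zero
  have hfd : ∀ x ∈ ball p R, HasFDerivAt v (fderiv ℝ v x) x := fun x hx =>
    (hvd.differentiableAt (isOpen_ball.mem_nhds hx)).hasFDerivAt
  have hfc : ContinuousOn (fderiv ℝ v) (ball p R) :=
    hv1.continuousOn_fderiv_of_isOpen isOpen_ball le_rfl
  obtain ⟨C1, hC1⟩ := hKc.exists_bound_of_continuousOn (hfc.mono hball)
  obtain ⟨M, hM⟩ := hKc.exists_bound_of_continuousOn (hv1.continuousOn.mono hball)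
  have hC1' : 0 ≤ C1 := le_trans (norm_nonneg _) (hC1 p (mem_closedBall_self hb0.le))
  have hM' : 0 ≤ M := le_trans (norm_nonneg _) (hM p (mem_closedBall_self hb0.le))
  have hlipv : LipschitzOnWith C1.toNNReal v (closedBall p b) := by
    apply (convex_closedBall p b).lipschitzOnWith_of_nnnorm_hasFDerivWithin_le
      (fun x hx => (hfd x (hball hx)).hasFDerivWithinAt)
    intro x hx
    rw [← norm_toNNReal]
    exact Real.toNNReal_mono (hC1 x hx)
  have hynorm : ∀ y : Metric.sphere (0 : EuclideanSpace ℝ (Fin n)) 1, ‖(y : EuclideanSpace ℝ (Fin n))‖ = 1 := fun y => by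
    have := y.2
    rwa [mem_sphere_zero_iff_norm] at this
  have hmem : ∀ (r : ℝ), |r| ≤ b → ∀ y : Metric.sphere (0 : EuclideanSpace ℝ (Fin n)) 1, p + r • (y : EuclideanSpace ℝ (Fin n)) ∈ closedBall p b := by
    intro r hr y
    rw [mem_closedBall, dist_self_add_left, norm_smul, hynorm y, mul_one]
    exact hr
  have habs : ∀ r ∈ s, |r| ≤ b := by
    intro r hr
    rw [abs_of_pos (lt_trans (by positivity) hr.1)]
    exact hr.2.le
  have hcy : ∀ (r : ℝ), |r| ≤ b → Continuous (fun y : Metric.sphere (0 : EuclideanSpace ℝ (Fin n)) 1 => v (p + r • (y : EuclideanSpace ℝ (Fin n)))) := by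
    intro r hr
    exact (hv1.continuousOn.mono hball).comp_continuous
      (continuous_const.add (continuous_subtype_val.const_smul r))
      (fun y => hmem r hr y)
  have hint : ∀ (r : ℝ), |r| ≤ b → Integrable (fun y : Metric.sphere (0 : EuclideanSpace ℝ (Fin n)) 1 => v (p + r • (y : EuclideanSpace ℝ (Fin n))) ) ((volume : Measure (EuclideanSpace ℝ (Fin n))).toSphere) := by
    intro r hr
    refine ⟨(hcy r hr).aestronglyMeasurable, ?_⟩
    apply MeasureTheory.HasFiniteIntegral.of_bounded (C := M)
    exact Filter.Eventually.of_forall fun y => hM _ (hmem r hr y)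
  set G : ℝ → ℝ := fun r => ∫ y : Metric.sphere (0 : EuclideanSpace ℝ (Fin n)) 1, v (p + r • (y : EuclideanSpace ℝ (Fin n)))  ∂((volume : Measure (EuclideanSpace ℝ (Fin n))).toSphere) with hGdef
  set μU : ℝ := (((volume : Measure (EuclideanSpace ℝ (Fin n))).toSphere) Set.univ).toReal with hμU
  have hμU0 : 0 ≤ μU := ENNReal.toReal_nonneg
  have hGbd : ∀ (r : ℝ), |r| ≤ b → |G r| ≤ M * μU := by
    intro r hr
    exact MeasureTheory.norm_integral_le_of_norm_le_const (Filter.Eventually.of_forall (fun y => hM _ (hmem r hr y)))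
  have hGlip : ∀ (r : ℝ), |r| ≤ b → ∀ (r' : ℝ), |r'| ≤ b →
      |G r - G r'| ≤ C1 * μU * |r - r'| := by
    intro r hr r' hr'
    have heq : G r - G r' = ∫ y : Metric.sphere (0 : EuclideanSpace ℝ (Fin n)) 1, (v (p + r • (y : EuclideanSpace ℝ (Fin n))) - v (p + r' • (y : EuclideanSpace ℝ (Fin n))))  ∂((volume : Measure (EuclideanSpace ℝ (Fin n))).toSphere) :=
      (integral_sub (hint r hr) (hint r' hr')).symm
    rw [heq]
    have : ∀ y : Metric.sphere (0 : EuclideanSpace ℝ (Fin n)) 1, ‖v (p + r • (y : EuclideanSpace ℝ (Fin n))) - v (p + r' • (y : EuclideanSpace ℝ (Fin n)))‖ ≤ C1 * |r - r'| := by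
      intro y
      have hd := hlipv.dist_le_mul _ (hmem r hr y) _ (hmem r' hr' y)
      rw [dist_add_left] at hd
      have : dist (r • (y : EuclideanSpace ℝ (Fin n))) (r' • (y : EuclideanSpace ℝ (Fin n))) = |r - r'| := by
        rw [dist_eq_norm, ← sub_smul, norm_smul, hynorm y, mul_one, Real.norm_eq_abs]
      rw [this, Real.coe_toNNReal _ hC1'] at hd
      rw [Real.norm_eq_abs, ← Real.dist_eq]
      exact hd
    calc ‖∫ y : Metric.sphere (0 : EuclideanSpace ℝ (Fin n)) 1, (v (p + r • (y : EuclideanSpace ℝ (Fin n))) - v (p + r' • (y : EuclideanSpace ℝ (Fin n))))  ∂((volume : Measure (EuclideanSpace ℝ (Fin n))).toSphere)‖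
        ≤ (C1 * |r - r'|) * μU := MeasureTheory.norm_integral_le_of_norm_le_const (Filter.Eventually.of_forall (fun y => this y))
      _ = C1 * μU * |r - r'| := by ring
  -- Lipschitz bound for r ↦ r ^ (n-1)
  set m : ℕ := n - 1 with hmdef
  have hpowlip : ∀ x ∈ s, ∀ x' ∈ s, |x ^ m - x' ^ m| ≤ (m * b ^ (m - 1)) * |x - x'| := by
    intro x hx x' hx'
    have hconv : Convex ℝ s := convex_Ioo _ _
    have hlp : LipschitzOnWith (Real.toNNReal (m * b ^ (m - 1))) (fun r : ℝ => r ^ m) s := by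
      apply hconv.lipschitzOnWith_of_nnnorm_hasDerivWithin_le
        (f' := fun r : ℝ => (m : ℝ) * r ^ (m - 1))
        (fun x hx => (hasDerivAt_pow m x).hasDerivWithinAt)
      intro z hz
      rw [← norm_toNNReal]
      apply Real.toNNReal_mono
      rw [Real.norm_eq_abs, abs_mul, abs_pow, Nat.abs_cast]
      have hzb : |z| ≤ b := habs z hz
      exact mul_le_mul_of_nonneg_left (pow_le_pow_left₀ (abs_nonneg z) hzb _) (Nat.cast_nonneg m)
    have := hlp.dist_le_mul x hx x' hx'
    rw [Real.coe_toNNReal _ (by positivity), Real.dist_eq, Real.dist_eq] at this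
    exact this
  refine ⟨(m * b ^ (m - 1)) * (M * μU) + b ^ m * (C1 * μU), by positivity, ?_⟩
  intro x hx x' hx'
  have hH : ∀ r : ℝ, sphereL2 u p r = r ^ m * G r := fun r => by simp only [sphereL2, hGdef, hvdef, hmdef]
  rw [hH, hH]
  have hsplit : x ^ m * G x - x' ^ m * G x' =
      (x ^ m - x' ^ m) * G x + x' ^ m * (G x - G x') := by ring
  rw [hsplit]
  have hxb := habs x hx
  have hx'b := habs x' hx'
  calc |(x ^ m - x' ^ m) * G x + x' ^ m * (G x - G x')|
      ≤ |(x ^ m - x' ^ m) * G x| + |x' ^ m * (G x - G x')| := abs_add_le _ _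
    _ = |x ^ m - x' ^ m| * |G x| + |x' ^ m| * |G x - G x'| := by rw [abs_mul, abs_mul]
    _ ≤ ((m * b ^ (m - 1)) * |x - x'|) * (M * μU) + b ^ m * (C1 * μU * |x - x'|) := by
        apply add_le_add
        · exact mul_le_mul (hpowlip x hx x' hx') (hGbd x hxb) (abs_nonneg _) (by positivity)
        · apply mul_le_mul _ (hGlip x hxb x' hx'b) (abs_nonneg _) (by positivity)
          rw [abs_pow]
          exact pow_le_pow_left₀ (abs_nonneg x') hx'b m
    _ = ((m * b ^ (m - 1)) * (M * μU) + b ^ m * (C1 * μU)) * |x - x'| := by ring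

theorem frequency_growth (n : ℕ) (u : EuclideanSpace ℝ (Fin n) → ℝ)
    (p : EuclideanSpace ℝ (Fin n)) (R : ℝ) (hR : 0 < R)
    (hu : IsHarmonicOn u (ball p R))
    (hne : ¬ ∀ y ∈ ball p R, u y = 0)
    (H' : ℝ → ℝ)
    (hderiv : ∀ r ∈ Set.Ioo (0:ℝ) R, HasDerivAt (sphereL2 u p) (H' r) r)
    (hpos : ∀ r ∈ Set.Ioo (0:ℝ) R, 0 < sphereL2 u p r)
    (β : ℝ → ℝ) (hβ : ∀ r, β r = r * H' r / (2 * sphereL2 u p r))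
    (r₁ r₂ : ℝ) (h1 : 0 < r₁) (h12 : r₁ < r₂) (h2 : r₂ < R) :
    sphereL2 u p r₂ / sphereL2 u p r₁ =
      Real.exp (2 * ∫ r in r₁..r₂, β r / r) ∧
    (MonotoneOn β (Set.Ioo (0:ℝ) R) →
      (r₂ / r₁) ^ (2 * β r₁) ≤ sphereL2 u p r₂ / sphereL2 u p r₁ ∧
      sphereL2 u p r₂ / sphereL2 u p r₁ ≤ (r₂ / r₁) ^ (2 * β r₂)) := by
  have hIccsub : Set.Icc r₁ r₂ ⊆ Set.Ioo (0:ℝ) R := fun x hx =>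
    ⟨lt_of_lt_of_le h1 hx.1, lt_of_le_of_lt hx.2 h2⟩
  have hr₁ : r₁ ∈ Set.Ioo (0:ℝ) R := ⟨h1, h12.trans h2⟩
  have hr₂ : r₂ ∈ Set.Ioo (0:ℝ) R := ⟨h1.trans h12, h2⟩
  obtain ⟨K, hK0, hKlip⟩ := sphereL2_lipschitz_bound u p R hu.1 r₁ r₂ h1 h12 h2
  set H := sphereL2 u p with hHdef
  have hssub : Set.Icc r₁ r₂ ⊆ Set.Ioo (r₁/2) ((r₂+R)/2) := fun x hx =>
    ⟨by linarith [hx.1], by linarith [hx.2]⟩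
  have hH'bd : ∀ x ∈ Set.Icc r₁ r₂, |H' x| ≤ K := by
    intro x hx
    have hnb : Set.Ioo (r₁/2) ((r₂+R)/2) ∈ nhds x := isOpen_Ioo.mem_nhds (hssub hx)
    have hlip : LipschitzOnWith K.toNNReal H (Set.Ioo (r₁/2) ((r₂+R)/2)) := by
      rw [lipschitzOnWith_iff_dist_le_mul]
      intro a ha a' ha'
      rw [Real.dist_eq, Real.dist_eq, Real.coe_toNNReal _ hK0]
      exact hKlip a ha a' ha'
    have hle := ((hderiv x (hIccsub hx)).hasFDerivAt).le_of_lipschitzOn hnb hlip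
    rwa [ContinuousLinearMap.norm_toSpanSingleton, Real.norm_eq_abs,
      Real.coe_toNNReal _ hK0] at hle
  have hcontH : ContinuousOn H (Set.Icc r₁ r₂) := fun x hx =>
    ((hderiv x (hIccsub hx)).continuousAt).continuousWithinAt
  obtain ⟨x₀, hx₀, hmin⟩ := isCompact_Icc.exists_isMinOn (Set.nonempty_Icc.2 h12.le) hcontH
  have hc0 : 0 < H x₀ := hpos x₀ (hIccsub hx₀)
  have hHge : ∀ x ∈ Set.Icc r₁ r₂, H x₀ ≤ H x := fun x hx => hmin hx
  have hq : IntegrableOn (fun x => H' x / H x) (Set.Ioc r₁ r₂) volume := by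
    have hIoc : Set.Ioc r₁ r₂ ⊆ Set.Icc r₁ r₂ := Set.Ioc_subset_Icc_self
    have hmeasH : AEStronglyMeasurable H (volume.restrict (Set.Ioc r₁ r₂)) :=
      (hcontH.mono hIoc).aestronglyMeasurable measurableSet_Ioc
    have hmeasd : AEMeasurable (fun x => deriv H x)
        (volume.restrict (Set.Ioc r₁ r₂)) :=
      (measurable_deriv H).aemeasurable.restrict
    have hae : (fun x => deriv H x / H x) =ᵐ[volume.restrict (Set.Ioc r₁ r₂)]
        (fun x => H' x / H x) := by
      apply ae_restrict_of_forall_mem measurableSet_Ioc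
      intro x hx
      simp only
      rw [(hderiv x (hIccsub (hIoc hx))).deriv]
    refine ⟨(((hmeasd.div ((hcontH.mono hIoc).aemeasurable measurableSet_Ioc)).aestronglyMeasurable).congr hae), ?_⟩
    apply MeasureTheory.HasFiniteIntegral.restrict_of_bounded (C := K / H x₀) measure_Ioc_lt_top
    apply ae_restrict_of_forall_mem measurableSet_Ioc
    intro x hx
    have hx' := hIoc hx
    rw [Real.norm_eq_abs, abs_div, abs_of_pos (lt_of_lt_of_le hc0 (hHge x hx'))]
    exact div_le_div₀ hK0 (hH'bd x hx') hc0 (hHge x hx')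
  have hintHH : IntervalIntegrable (fun x => H' x / H x) volume r₁ r₂ :=
    (intervalIntegrable_iff_integrableOn_Ioc_of_le h12.le).2 hq
  have hFTC : ∫ x in r₁..r₂, H' x / H x = Real.log (H r₂) - Real.log (H r₁) := by
    apply intervalIntegral.integral_eq_sub_of_hasDerivAt _ hintHH
    intro x hx
    rw [uIcc_of_le h12.le] at hx
    exact (hderiv x (hIccsub hx)).log (ne_of_gt (hpos x (hIccsub hx)))
  have hbeta : ∀ x ∈ Set.Icc r₁ r₂, β x / x = (H' x / H x) / 2 := by
    intro x hx
    have hx0 : x ≠ 0 := ne_of_gt (lt_of_lt_of_le h1 hx.1)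
    have hH0 : H x ≠ 0 := ne_of_gt (hpos x (hIccsub hx))
    rw [hβ]
    field_simp
  have hIβ : ∫ x in r₁..r₂, β x / x = (Real.log (H r₂) - Real.log (H r₁)) / 2 := by
    rw [← hFTC, ← intervalIntegral.integral_div]
    apply intervalIntegral.integral_congr
    intro x hx
    rw [uIcc_of_le h12.le] at hx
    exact hbeta x hx
  have hpart1 : H r₂ / H r₁ = Real.exp (2 * ∫ r in r₁..r₂, β r / r) := by
    rw [hIβ,
      show 2 * ((Real.log (H r₂) - Real.log (H r₁)) / 2)
        = Real.log (H r₂) - Real.log (H r₁) by ring,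
      Real.exp_sub, Real.exp_log (hpos r₂ hr₂), Real.exp_log (hpos r₁ hr₁)]
  refine ⟨hpart1, ?_⟩
  intro hm
  have hβint : IntervalIntegrable (fun r => β r / r) volume r₁ r₂ := by
    rw [intervalIntegrable_iff_integrableOn_Ioc_of_le h12.le]
    exact MeasureTheory.IntegrableOn.congr_fun (hq.div_const 2)
      (fun x hx => (hbeta x (Set.Ioc_subset_Icc_self hx)).symm) measurableSet_Ioc
  have hposuIcc : ∀ x ∈ Set.uIcc r₁ r₂, 0 < x := by
    intro x hx
    rw [uIcc_of_le h12.le] at hx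
    exact lt_of_lt_of_le h1 hx.1
  have hconst : ∀ (a : ℝ), IntervalIntegrable (fun r => a / r) volume r₁ r₂ := by
    intro a
    apply ContinuousOn.intervalIntegrable
    exact continuousOn_const.div continuousOn_id (fun x hx => ne_of_gt (hposuIcc x hx))
  have h0ni : (0:ℝ) ∉ Set.uIcc r₁ r₂ := by
    rw [uIcc_of_le h12.le]
    exact fun h => absurd h.1 (not_le.2 h1)
  have hconsteval : ∀ a : ℝ, ∫ r in r₁..r₂, a / r = a * Real.log (r₂/r₁) := by
    intro a
    have heq : ∀ r : ℝ, a / r = a * (1/r) := fun r => by ring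
    simp_rw [heq]
    rw [intervalIntegral.integral_const_mul, integral_one_div h0ni]
  have hlow : β r₁ * Real.log (r₂/r₁) ≤ ∫ r in r₁..r₂, β r / r := by
    rw [← hconsteval (β r₁)]
    apply intervalIntegral.integral_mono_on h12.le (hconst (β r₁)) hβint
    intro x hx
    have hx0 : 0 < x := lt_of_lt_of_le h1 hx.1
    exact (div_le_div_iff_of_pos_right hx0).2 (hm hr₁ (hIccsub hx) hx.1)
  have hupp : (∫ r in r₁..r₂, β r / r) ≤ β r₂ * Real.log (r₂/r₁) := by
    rw [← hconsteval (β r₂)]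
    apply intervalIntegral.integral_mono_on h12.le hβint (hconst (β r₂))
    intro x hx
    have hx0 : 0 < x := lt_of_lt_of_le h1 hx.1
    exact (div_le_div_iff_of_pos_right hx0).2 (hm (hIccsub hx) hr₂ hx.2)
  have hdivpos : 0 < r₂ / r₁ := div_pos (h1.trans h12) h1
  constructor
  · rw [hpart1, Real.rpow_def_of_pos hdivpos]
    apply Real.exp_le_exp.2
    nlinarith [hlow]
  · rw [hpart1, Real.rpow_def_of_pos hdivpos]
    apply Real.exp_le_exp.2
    nlinarith [hupp]
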